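/- arXiv:1905.00527 — 3 statements merged into one kernel-verified Lean document; each statement's English description precedes it below -/
import Mathlib

section
/- There exist a strictly increasing sequence (s_n)_{n∈ℕ} of natural numbers and a real number α such that for all m, n ∈ ℕ, the distance from ((s_n + n)² − s_m²)·α to the nearest integer is at least 1/4. In particular, the difference set {(s_n + n)² : n ∈ ℕ} − {s_m² : m ∈ ℕ} is not a set of Bohr recurrence. -/
namespace LacunaryBohr

def t (n : ℕ) : ℕ := 4 ^ (n + 5)

def q (n : ℕ) : ℕ := 2 * n * 2 ^ t n + n ^ 2

noncomputable def jf (n : ℕ) (prev : ℕ) : ℕ :=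
  let θ : ℝ := Int.fract ((q n : ℝ) * prev / 4 ^ t (n - 1))
  ⌈(if θ ≤ 1 / 2 then 1 / 2 - θ else 3 / 2 - θ) / ((q n : ℝ) / 4 ^ t n)⌉₊

noncomputable def u : ℕ → ℕ
  | 0 => 0
  | n + 1 => u n * 4 ^ (t (n + 1) - t n) + jf (n + 1) (u n)

noncomputable def w : ℕ → ℝ
  | 0 => 0
  | n + 1 => (jf (n + 1) (u n) : ℝ) / 4 ^ t (n + 1)

noncomputable def α : ℝ := ∑' n, w n

lemma t_strictMono : StrictMono t := by
  intro a b h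
  exact Nat.pow_lt_pow_right (by norm_num) (by omega)

lemma t_le_t {a b : ℕ} (h : a ≤ b) : t a ≤ t b :=
  t_strictMono.monotone h

lemma t_add_le (a m : ℕ) : t a + m ≤ t (m + a) := by
  induction m with
  | zero => simp
  | succ m ih =>
      have h1 : t (m + a) + 1 ≤ t (m + a + 1) := t_strictMono (by omega)
      have h2 : m + 1 + a = m + a + 1 := by omega
      rw [h2]; omega

lemma t_ge (n : ℕ) : 2 * n + 10 ≤ t n := by
  have h1 : n + 5 < 2 ^ (n + 5) := Nat.lt_two_pow_self
  have h2 : (2:ℕ) ^ (n + 5 + 1) ≤ 2 ^ (2 * (n + 5)) := Nat.pow_le_pow_right (by norm_num) (by omega)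
  have h2b : (2:ℕ) ^ (n + 5 + 1) = 2 * 2 ^ (n + 5) := by ring
  have h3 : (4:ℕ) ^ (n + 5) = 2 ^ (2 * (n + 5)) := by
    rw [show (4:ℕ) = 2 ^ 2 by norm_num, ← pow_mul]
  unfold t
  rw [h3]
  omega

lemma q_pos (n : ℕ) (hn : 0 < n) : 0 < q n := by
  unfold q
  have := Nat.pow_pos (n := t n) (show 0 < 2 by norm_num)
  positivity

lemma q_le (n : ℕ) : 16 * q n ≤ 4 ^ t n := by
  have hT := t_ge n
  have hn2 : n < 2 ^ n := Nat.lt_two_pow_self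
  have h1 : 2 * n ≤ 2 ^ (n + 1) := by
    have : n < 2 ^ n := Nat.lt_two_pow_self; calc 2 * n ≤ 2 * 2 ^ n := by omega
      _ = 2 ^ (n + 1) := by ring
  have h2 : n ^ 2 ≤ 2 ^ (2 * n) := by
    have : n ^ 2 ≤ (2 ^ n) ^ 2 := Nat.pow_le_pow_left (le_of_lt hn2) 2
    calc n ^ 2 ≤ (2 ^ n) ^ 2 := this
      _ = 2 ^ (2 * n) := by rw [← pow_mul]; ring_nf
  have hq : q n ≤ 2 ^ (2 * n + 2) * 2 ^ t n := by
    have hb : (0:ℕ) < 2 ^ t n := Nat.pow_pos (by norm_num)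
    have e1 : (2:ℕ) ^ (n + 1) ≤ 2 ^ (2 * n + 1) := Nat.pow_le_pow_right (by norm_num) (by omega)
    have e2 : (2:ℕ) ^ (2 * n) ≤ 2 ^ (2 * n + 1) := Nat.pow_le_pow_right (by norm_num) (by omega)
    have e3 : (2:ℕ) ^ (2 * n + 1) + 2 ^ (2 * n + 1) = 2 ^ (2 * n + 2) := by ring
    have hsum : (2:ℕ) ^ (n + 1) + 2 ^ (2 * n) ≤ 2 ^ (2 * n + 2) := by omega
    calc q n = 2 * n * 2 ^ t n + n ^ 2 := rfl
      _ ≤ 2 ^ (n + 1) * 2 ^ t n + 2 ^ (2 * n) * 2 ^ t n :=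
          Nat.add_le_add (Nat.mul_le_mul_right _ h1)
            (le_trans h2 (Nat.le_mul_of_pos_right _ hb))
      _ = (2 ^ (n + 1) + 2 ^ (2 * n)) * 2 ^ t n := by ring
      _ ≤ 2 ^ (2 * n + 2) * 2 ^ t n := Nat.mul_le_mul_right _ hsum
  have h4 : (4:ℕ) ^ t n = 2 ^ t n * 2 ^ t n := by
    rw [show (4:ℕ) = 2 * 2 by norm_num, mul_pow]
  calc 16 * q n ≤ 16 * (2 ^ (2 * n + 2) * 2 ^ t n) := Nat.mul_le_mul_left _ hq
    _ = 2 ^ (2 * n + 6) * 2 ^ t n := by ring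
    _ ≤ 2 ^ t n * 2 ^ t n :=
        Nat.mul_le_mul_right _ (Nat.pow_le_pow_right (by norm_num) (by omega))
    _ = 4 ^ t n := h4.symm

lemma delta_pos (n : ℕ) (hn : 0 < n) : 0 < (q n : ℝ) / 4 ^ t n := by
  have := q_pos n hn
  positivity

lemma delta_le (n : ℕ) (hn : 0 < n) : (q n : ℝ) / 4 ^ t n ≤ 1 / 16 := by
  rw [div_le_div_iff₀ (by positivity) (by norm_num)]
  have := q_le n
  have : ((16 * q n : ℕ) : ℝ) ≤ ((4 ^ t n : ℕ) : ℝ) := Nat.cast_le.mpr this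
  push_cast at this
  linarith

lemma target_mem (θ : ℝ) (h0 : 0 ≤ θ) (h1 : θ < 1) :
    0 ≤ (if θ ≤ 1 / 2 then 1 / 2 - θ else 3 / 2 - θ) ∧
      (if θ ≤ 1 / 2 then 1 / 2 - θ else 3 / 2 - θ) ≤ 1 := by
  split <;> constructor <;> linarith

lemma jf_le (n : ℕ) (hn : 0 < n) (prev : ℕ) : jf n prev ≤ 2 ^ t n := by
  unfold jf
  set θ : ℝ := Int.fract ((q n : ℝ) * prev / 4 ^ t (n - 1)) with hθ
  obtain ⟨ht0, ht1⟩ := target_mem θ (Int.fract_nonneg _) (Int.fract_lt_one _)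
  have hδ : (2 : ℝ) / 2 ^ t n ≤ (q n : ℝ) / 4 ^ t n := by
    rw [div_le_div_iff₀ (by positivity) (by positivity)]
    have hq : (2 * n * 2 ^ t n : ℝ) ≤ (q n : ℝ) := by
      unfold q; push_cast; nlinarith [sq_nonneg (n:ℝ)]
    have h4 : (4:ℝ) ^ t n = 2 ^ t n * 2 ^ t n := by
      rw [show (4:ℝ) = 2 * 2 by norm_num, mul_pow]
    have hn1 : (1:ℝ) ≤ (n:ℝ) := by exact_mod_cast hn
    nlinarith [pow_pos (show (0:ℝ) < 2 by norm_num) (t n)]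
  have hδpos : (0:ℝ) < (q n : ℝ) / 4 ^ t n := delta_pos n hn
  rw [Nat.ceil_le]
  push_cast
  rw [div_le_iff₀ hδpos]
  calc (if θ ≤ 1 / 2 then 1 / 2 - θ else 3 / 2 - θ) ≤ 1 := ht1
    _ ≤ (2 ^ t n : ℝ) * ((q n : ℝ) / 4 ^ t n) := by
        have := mul_le_mul_of_nonneg_left hδ (show (0:ℝ) ≤ 2 ^ t n by positivity)
        have h2 : (2:ℝ) ^ t n * (2 / 2 ^ t n) = 2 := by
          field_simp
        linarith

lemma w_nonneg (n : ℕ) : 0 ≤ w n := by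
  cases n <;> simp [w] <;> positivity

lemma w_le (n : ℕ) : w n ≤ (1 / 2 : ℝ) ^ t n := by
  cases n with
  | zero => positivity
  | succ m =>
      simp only [w]
      have hj : (jf (m + 1) (u m) : ℝ) ≤ 2 ^ t (m + 1) := by
        exact_mod_cast jf_le (m + 1) (by omega) (u m)
      have h4 : (4:ℝ) ^ t (m+1) = 2 ^ t (m+1) * 2 ^ t (m+1) := by
        rw [show (4:ℝ) = 2 * 2 by norm_num, mul_pow]
      rw [div_le_iff₀ (by positivity), h4]
      calc (jf (m + 1) (u m) : ℝ) ≤ 2 ^ t (m+1) := hj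
        _ = (1 / 2) ^ t (m+1) * (2 ^ t (m+1) * 2 ^ t (m+1)) := by
            rw [div_pow, one_pow]; field_simp

lemma half_t_le (n : ℕ) : ((1:ℝ) / 2) ^ t n ≤ (1 / 2) ^ n := by
  apply pow_le_pow_of_le_one (by norm_num) (by norm_num)
  have := t_ge n; omega

lemma summable_w : Summable w := by
  apply Summable.of_nonneg_of_le w_nonneg (fun n => le_trans (w_le n) (half_t_le n))
  exact summable_geometric_two

lemma partial_eq (n : ℕ) :
    ∑ k ∈ Finset.range (n + 1), w k = (u n : ℝ) / 4 ^ t n := by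
  induction n with
  | zero => simp [w, u]
  | succ n ih =>
      rw [Finset.sum_range_succ, ih]
      have hle : t n ≤ t (n + 1) := le_of_lt (t_strictMono (Nat.lt_succ_self n))
      have hpow : (4:ℝ) ^ t n * (4:ℝ) ^ (t (n + 1) - t n) = 4 ^ t (n + 1) := by
        rw [← pow_add, Nat.add_sub_cancel' hle]
      show (u n : ℝ) / 4 ^ t n + (jf (n + 1) (u n) : ℝ) / 4 ^ t (n + 1)
          = (u (n + 1) : ℝ) / 4 ^ t (n + 1)
      rw [show u (n + 1) = u n * 4 ^ (t (n + 1) - t n) + jf (n + 1) (u n) from rfl]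
      push_cast
      rw [← hpow]
      have h1 : (0:ℝ) < 4 ^ t n := by positivity
      have h2 : (0:ℝ) < (4:ℝ) ^ (t (n + 1) - t n) := by positivity
      field_simp

/-- tail bound -/
lemma tail_bound (n : ℕ) :
    0 ≤ α - (u n : ℝ) / 4 ^ t n ∧
      α - (u n : ℝ) / 4 ^ t n ≤ 2 * (1 / 2 : ℝ) ^ t (n + 1) := by
  have hsum := summable_w
  have key : (∑ k ∈ Finset.range (n + 1), w k) + ∑' m, w (m + (n + 1)) = α :=
    hsum.sum_add_tsum_nat_add (n + 1)
  rw [partial_eq] at key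
  have hs' : Summable fun m => w (m + (n + 1)) :=
    (summable_nat_add_iff (n + 1)).mpr hsum
  have hte : ∀ m, w (m + (n + 1)) ≤ (1 / 2 : ℝ) ^ t (n + 1) * (1 / 2) ^ m := by
    intro m
    calc w (m + (n + 1)) ≤ (1 / 2 : ℝ) ^ t (m + (n + 1)) := w_le _
      _ ≤ (1 / 2 : ℝ) ^ (t (n + 1) + m) :=
          pow_le_pow_of_le_one (by norm_num) (by norm_num) (t_add_le (n + 1) m)
      _ = (1 / 2 : ℝ) ^ t (n + 1) * (1 / 2) ^ m := by rw [pow_add]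
  have h0 : 0 ≤ ∑' m, w (m + (n + 1)) := tsum_nonneg fun m => w_nonneg _
  have h1 : ∑' m, w (m + (n + 1)) ≤ ∑' m : ℕ, (1 / 2 : ℝ) ^ t (n + 1) * (1 / 2) ^ m :=
    Summable.tsum_le_tsum hte hs' (summable_geometric_two.mul_left _)
  have h2 : ∑' m : ℕ, (1 / 2 : ℝ) ^ t (n + 1) * (1 / 2) ^ m
      = (1 / 2 : ℝ) ^ t (n + 1) * 2 := by
    rw [tsum_mul_left, tsum_geometric_two]
  constructor
  · linarith
  · linarith

lemma fract_mem (n : ℕ) :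
    Int.fract ((q (n + 1) : ℝ) * u (n + 1) / 4 ^ t (n + 1)) ∈
      Set.Icc (1 / 2 : ℝ) (1 / 2 + (q (n + 1) : ℝ) / 4 ^ t (n + 1)) := by
  have hm : 0 < n + 1 := Nat.succ_pos n
  set δ : ℝ := (q (n + 1) : ℝ) / 4 ^ t (n + 1) with hδdef
  have hδpos : 0 < δ := delta_pos (n + 1) hm
  have hδle : δ ≤ 1 / 16 := delta_le (n + 1) hm
  set x : ℝ := (q (n + 1) : ℝ) * u n / 4 ^ t n with hxdef
  set θ : ℝ := Int.fract x with hθdef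
  have hθ0 : 0 ≤ θ := Int.fract_nonneg x
  have hθ1 : θ < 1 := Int.fract_lt_one x
  set target : ℝ := if θ ≤ 1 / 2 then 1 / 2 - θ else 3 / 2 - θ with htar
  have ht0 : 0 ≤ target := by rw [htar]; split <;> linarith
  have hj : jf (n + 1) (u n) = ⌈target / δ⌉₊ := by
    simp only [jf, Nat.add_sub_cancel, hθdef, hxdef, htar, hδdef]
  set j : ℝ := (jf (n + 1) (u n) : ℝ) with hjdef
  have hj1 : target / δ ≤ j := by rw [hjdef, hj]; exact Nat.le_ceil _
  have hj2 : j < target / δ + 1 := by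
    rw [hjdef, hj]; exact Nat.ceil_lt_add_one (div_nonneg ht0 hδpos.le)
  have hjd1 : target ≤ j * δ := by
    rw [← div_le_iff₀ hδpos]; exact hj1
  have hjd2 : j * δ < target + δ := by
    have h := mul_lt_mul_of_pos_right hj2 hδpos
    have h2 : target / δ * δ = target := div_mul_cancel₀ _ (ne_of_gt hδpos)
    nlinarith
  have hle : t n ≤ t (n + 1) := le_of_lt (t_strictMono (Nat.lt_succ_self n))
  have hpow : (4:ℝ) ^ t n * (4:ℝ) ^ (t (n + 1) - t n) = 4 ^ t (n + 1) := by
    rw [← pow_add, Nat.add_sub_cancel' hle]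
  have heq : (q (n + 1) : ℝ) * u (n + 1) / 4 ^ t (n + 1) = x + j * δ := by
    rw [show u (n + 1) = u n * 4 ^ (t (n + 1) - t n) + jf (n + 1) (u n) from rfl]
    rw [hxdef, hjdef, hδdef]
    push_cast
    rw [← hpow]
    have h1 : (0:ℝ) < 4 ^ t n := by positivity
    have h2 : (0:ℝ) < (4:ℝ) ^ (t (n + 1) - t n) := by positivity
    field_simp
  have hfr : Int.fract (x + j * δ) = Int.fract (θ + j * δ) := by
    have : x + j * δ = (⌊x⌋ : ℝ) + (θ + j * δ) := by
      rw [hθdef]; unfold Int.fract; ring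
    rw [this, Int.fract_intCast_add]
  rw [heq, hfr]
  by_cases hcase : θ ≤ 1 / 2
  · have hteq : target = 1 / 2 - θ := by rw [htar, if_pos hcase]
    have hv1 : 1 / 2 ≤ θ + j * δ := by rw [hteq] at hjd1; linarith
    have hv2 : θ + j * δ ≤ 1 / 2 + δ := by rw [hteq] at hjd2; linarith
    have hself : Int.fract (θ + j * δ) = θ + j * δ :=
      Int.fract_eq_self.mpr ⟨by linarith, by linarith⟩
    rw [hself]; exact ⟨hv1, hv2⟩
  · have hteq : target = 3 / 2 - θ := by rw [htar, if_neg hcase]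
    push_neg at hcase
    have hv1 : 3 / 2 ≤ θ + j * δ := by rw [hteq] at hjd1; linarith
    have hv2 : θ + j * δ ≤ 3 / 2 + δ := by rw [hteq] at hjd2; linarith
    have hsplit : θ + j * δ = (θ + j * δ - 1) + (1 : ℤ) := by push_cast; ring
    have hself : Int.fract (θ + j * δ - 1) = θ + j * δ - 1 :=
      Int.fract_eq_self.mpr ⟨by linarith, by linarith⟩
    rw [hsplit, Int.fract_add_intCast, hself]
    constructor <;> linarith

lemma t_succ (n : ℕ) : t (n + 1) = 4 * t n := by
  unfold t
  rw [show n + 1 + 5 = (n + 5) + 1 by omega, pow_succ]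
  ring

lemma n_le_pow (n : ℕ) : (n : ℝ) ≤ 2 ^ t n := by
  have h1 : n < 2 ^ n := Nat.lt_two_pow_self
  have h2 : (2:ℕ) ^ n ≤ 2 ^ t n := Nat.pow_le_pow_right (by norm_num) (by have := t_ge n; omega)
  exact_mod_cast le_of_lt (lt_of_lt_of_le h1 h2)

/-- the tail times A_n is tiny -/
lemma tail_small (n : ℕ) :
    0 ≤ α - (u n : ℝ) / 4 ^ t n ∧
      ((2:ℝ) ^ t n + n) ^ 2 * (α - (u n : ℝ) / 4 ^ t n) ≤ 1 / 1024 := by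
  obtain ⟨h0, h1⟩ := tail_bound n
  refine ⟨h0, ?_⟩
  have hA : ((2:ℝ) ^ t n + n) ^ 2 ≤ 4 * 4 ^ t n := by
    have hn : (n : ℝ) ≤ 2 ^ t n := n_le_pow n
    have h2 : ((2:ℝ) ^ t n + n) ^ 2 ≤ (2 * 2 ^ t n) ^ 2 := by
      apply pow_le_pow_left₀ (by positivity) _ 2
      linarith
    have h4 : ((2:ℝ) * 2 ^ t n) ^ 2 = 4 * 4 ^ t n := by
      have e : ((2:ℝ) ^ t n) ^ 2 = 4 ^ t n := by
        rw [← pow_mul, mul_comm, pow_mul]; norm_num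
      rw [mul_pow, e]; norm_num
    calc ((2:ℝ) ^ t n + n) ^ 2 ≤ (2 * 2 ^ t n) ^ 2 := h2
      _ = 4 * 4 ^ t n := h4
  have hApos : (0:ℝ) ≤ ((2:ℝ) ^ t n + n) ^ 2 := by positivity
  have key : (4 * 4 ^ t n : ℝ) * (2 * (1 / 2) ^ t (n + 1)) ≤ 1 / 1024 := by
    rw [t_succ]
    have e1 : (4:ℝ) ^ t n = 2 ^ (2 * t n) := by
      rw [show (4:ℝ) = 2 ^ 2 by norm_num, ← pow_mul]
    have e2 : ((1:ℝ) / 2) ^ (4 * t n) = 1 / 2 ^ (4 * t n) := by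
      rw [div_pow, one_pow]
    rw [e1, e2]
    have e3 : (2:ℝ) ^ (4 * t n) = 2 ^ (2 * t n) * 2 ^ (2 * t n) := by
      rw [← pow_add]; ring_nf
    have hp : (0:ℝ) < 2 ^ (2 * t n) := by positivity
    have hbig : (8192:ℝ) ≤ 2 ^ (2 * t n) := by
      calc (8192:ℝ) = 2 ^ 13 := by norm_num
        _ ≤ 2 ^ (2 * t n) := by
            apply pow_le_pow_right₀ (by norm_num)
            have := t_ge n; omega
    rw [e3]
    have hne : (2:ℝ) ^ (2 * t n) ≠ 0 := ne_of_gt hp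
    have e4 : 4 * (2:ℝ) ^ (2 * t n) * (2 * (1 / (2 ^ (2 * t n) * 2 ^ (2 * t n))))
        = 8 / 2 ^ (2 * t n) := by
      field_simp
      ring
    rw [e4, div_le_div_iff₀ hp (by norm_num)]
    linarith
  calc ((2:ℝ) ^ t n + n) ^ 2 * (α - (u n : ℝ) / 4 ^ t n)
      ≤ (4 * 4 ^ t n) * (2 * (1 / 2) ^ t (n + 1)) := by
        apply mul_le_mul hA h1 h0 (by positivity)
    _ ≤ 1 / 1024 := key

lemma pow_two_eq_four (n : ℕ) : ((2:ℝ) ^ t n) ^ 2 = 4 ^ t n := by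
  rw [← pow_mul, mul_comm, pow_mul]; norm_num

/-- near-integer property for B_n = s_n ^ 2 -/
lemma B_near (n : ℕ) :
    ∃ K : ℤ, |((2:ℝ) ^ t n) ^ 2 * α - K| ≤ 1 / 16 := by
  refine ⟨(u n : ℤ), ?_⟩
  obtain ⟨h0, h1⟩ := tail_small n
  have hB4 := pow_two_eq_four n
  have hBA : ((2:ℝ) ^ t n) ^ 2 ≤ ((2:ℝ) ^ t n + n) ^ 2 := by
    apply pow_le_pow_left₀ (by positivity) _ 2
    have : (0:ℝ) ≤ n := Nat.cast_nonneg n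
    linarith
  have hsplit : ((2:ℝ) ^ t n) ^ 2 * α - ((u n : ℤ) : ℝ)
      = ((2:ℝ) ^ t n) ^ 2 * (α - (u n : ℝ) / 4 ^ t n) := by
    rw [mul_sub, hB4]
    push_cast
    have : (0:ℝ) < 4 ^ t n := by positivity
    field_simp
  rw [hsplit]
  rw [abs_of_nonneg (mul_nonneg (by positivity) h0)]
  calc ((2:ℝ) ^ t n) ^ 2 * (α - (u n : ℝ) / 4 ^ t n)
      ≤ ((2:ℝ) ^ t n + n) ^ 2 * (α - (u n : ℝ) / 4 ^ t n) :=
        mul_le_mul_of_nonneg_right hBA h0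
    _ ≤ 1 / 1024 := h1
    _ ≤ 1 / 16 := by norm_num

/-- near-half-integer property for A_n = (s_n + n) ^ 2 -/
lemma A_near (n : ℕ) (hn : 0 < n) :
    ∃ L : ℤ, |((2:ℝ) ^ t n + n) ^ 2 * α - L - 1 / 2| ≤ 1 / 8 := by
  obtain ⟨m, rfl⟩ : ∃ m, n = m + 1 := ⟨n - 1, by omega⟩
  obtain ⟨h0, h1⟩ := tail_small (m + 1)
  have hfr := fract_mem m
  set F : ℝ := (q (m + 1) : ℝ) * u (m + 1) / 4 ^ t (m + 1) with hF
  obtain ⟨hf1, hf2⟩ := hfr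
  have hδle : (q (m + 1) : ℝ) / 4 ^ t (m + 1) ≤ 1 / 16 := delta_le (m + 1) (by omega)
  refine ⟨(u (m + 1) : ℤ) + ⌊F⌋, ?_⟩
  have hB4 := pow_two_eq_four (m + 1)
  have hq : ((q (m + 1) : ℕ) : ℝ)
      = 2 * (m + 1) * 2 ^ t (m + 1) + ((m:ℝ) + 1) ^ 2 := by
    simp only [q]; push_cast; ring
  have hA4 : ((2:ℝ) ^ t (m + 1) + ((m:ℕ) + 1 : ℕ)) ^ 2
      = 4 ^ t (m + 1) + (q (m + 1) : ℝ) := by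
    rw [hq, ← hB4]; push_cast; ring
  have hkey : ((2:ℝ) ^ t (m + 1) + ((m:ℕ) + 1 : ℕ)) ^ 2 * ((u (m + 1) : ℝ) / 4 ^ t (m + 1))
      = (u (m + 1) : ℝ) + F := by
    rw [hA4, hF]
    have h4 : (0:ℝ) < 4 ^ t (m + 1) := by positivity
    field_simp
  have hsplit : ((2:ℝ) ^ t (m + 1) + ((m:ℕ) + 1 : ℕ)) ^ 2 * α
        - (((u (m + 1) : ℤ) + ⌊F⌋ : ℤ) : ℝ) - 1 / 2
      = ((2:ℝ) ^ t (m + 1) + ((m:ℕ) + 1 : ℕ)) ^ 2 * (α - (u (m + 1) : ℝ) / 4 ^ t (m + 1))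
        + (Int.fract F - 1 / 2) := by
    rw [mul_sub, hkey, Int.fract]
    push_cast
    ring
  rw [hsplit]
  set X : ℝ := ((2:ℝ) ^ t (m + 1) + ((m:ℕ) + 1 : ℕ)) ^ 2
      * (α - (u (m + 1) : ℝ) / 4 ^ t (m + 1)) with hX
  have hb1 : |X| ≤ 1 / 1024 := by
    rw [hX, abs_of_nonneg (mul_nonneg (by positivity) h0)]
    exact h1
  have hb2 : |Int.fract F - 1 / 2| ≤ 1 / 16 := by
    rw [abs_le]; constructor <;> linarith
  have htri := abs_add_le X (Int.fract F - 1 / 2)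
  linarith

end LacunaryBohr

/-- A set `R ⊆ ℤ` is a set of Bohr recurrence if for every `d`, every `α ∈ ℝ^d`
and every `ε > 0`, there is `r ∈ R` such that every coordinate of `rα` is within
`ε` of an integer. -/
def BohrRecurrenceZ (R : Set ℤ) : Prop :=
  ∀ (d : ℕ) (α : Fin d → ℝ) (ε : ℝ), 0 < ε →
    ∃ r ∈ R, ∀ i : Fin d, ∃ k : ℤ, |(r : ℝ) * α i - (k : ℝ)| < ε

/-- There exist a strictly increasing sequence `(s_n)` of naturals and `α ∈ ℝ` such
that for all `m, n ≥ 1`, the distance of `((s_n + n)² - s_m²)·α` to the nearest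
integer is at least `1/4`; in particular the difference set
`{(s_n + n)² : n ≥ 1} - {s_m² : m ≥ 1}` is not a set of Bohr recurrence. -/
theorem exists_lacunary_difference_not_bohr :
    ∃ (s : ℕ → ℕ) (α : ℝ), StrictMono s ∧
      (∀ m n : ℕ, 0 < m → 0 < n → ∀ k : ℤ,
        (1 / 4 : ℝ) ≤ |((((s n : ℤ) + n) ^ 2 - (s m : ℤ) ^ 2 : ℤ) : ℝ) * α - (k : ℝ)|) ∧
      ¬ BohrRecurrenceZ
        {z : ℤ | ∃ n m : ℕ, 0 < n ∧ 0 < m ∧ z = ((s n : ℤ) + n) ^ 2 - (s m : ℤ) ^ 2} := by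
  classical
  refine ⟨fun n => 2 ^ LacunaryBohr.t n, LacunaryBohr.α, ?_, ?_⟩
  · intro a b h
    exact Nat.pow_lt_pow_right one_lt_two (LacunaryBohr.t_strictMono h)
  have main : ∀ m n : ℕ, 0 < m → 0 < n → ∀ k : ℤ,
      (1 / 4 : ℝ) ≤ |((((((2:ℕ) ^ LacunaryBohr.t n : ℕ) : ℤ) + n) ^ 2
        - (((2:ℕ) ^ LacunaryBohr.t m : ℕ) : ℤ) ^ 2 : ℤ) : ℝ) * LacunaryBohr.α - (k : ℝ)| := by
    intro m n hm hn k
    obtain ⟨K, hK⟩ := LacunaryBohr.B_near m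
    obtain ⟨L, hL⟩ := LacunaryBohr.A_near n hn
    have hexp : ((((((2:ℕ) ^ LacunaryBohr.t n : ℕ) : ℤ) + n) ^ 2
          - (((2:ℕ) ^ LacunaryBohr.t m : ℕ) : ℤ) ^ 2 : ℤ) : ℝ) * LacunaryBohr.α - (k : ℝ)
        = (((2:ℝ) ^ LacunaryBohr.t n + n) ^ 2 * LacunaryBohr.α - L - 1 / 2)
          - (((2:ℝ) ^ LacunaryBohr.t m) ^ 2 * LacunaryBohr.α - K)
          + (((L - K - k : ℤ) : ℝ) + 1 / 2) := by
      push_cast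
      ring
    rw [hexp]
    rw [abs_le] at hK hL
    set e1 : ℝ := (2:ℝ) ^ LacunaryBohr.t n * LacunaryBohr.α * 0 with he1dummy
    clear he1dummy e1
    rcases le_or_gt 0 (L - K - k) with h | h
    · have hcast : (0:ℝ) ≤ ((L - K - k : ℤ) : ℝ) := by exact_mod_cast h
      have : (1 / 4 : ℝ) ≤ (((2:ℝ) ^ LacunaryBohr.t n + n) ^ 2 * LacunaryBohr.α - L - 1 / 2)
          - (((2:ℝ) ^ LacunaryBohr.t m) ^ 2 * LacunaryBohr.α - K)
          + (((L - K - k : ℤ) : ℝ) + 1 / 2) := by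
        linarith [hL.1, hL.2, hK.1, hK.2]
      exact le_trans this (le_abs_self _)
    · have h' : L - K - k ≤ -1 := by omega
      have hcast : ((L - K - k : ℤ) : ℝ) ≤ -1 := by exact_mod_cast h'
      have : (1 / 4 : ℝ) ≤ -((((2:ℝ) ^ LacunaryBohr.t n + n) ^ 2 * LacunaryBohr.α - L - 1 / 2)
          - (((2:ℝ) ^ LacunaryBohr.t m) ^ 2 * LacunaryBohr.α - K)
          + (((L - K - k : ℤ) : ℝ) + 1 / 2)) := by
        linarith [hL.1, hL.2, hK.1, hK.2]
      exact le_trans this (neg_le_abs _)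
  refine ⟨main, ?_⟩
  intro hB
  obtain ⟨r, hr, hco⟩ := hB 1 (fun _ => LacunaryBohr.α) (1 / 4) (by norm_num)
  obtain ⟨n, m, hn, hm, rfl⟩ := hr
  obtain ⟨k, hk⟩ := hco 0
  exact absurd hk (not_lt.mpr (main m n hm hn k))
end

section
/- Let 0 < ℓ < 1 and let (t_k)_{k∈ℕ} be a strictly increasing sequence of positive integers satisfying t_{k+1}/t_k > 1/ℓ + 1 for all k ∈ ℕ. Let (u_k)_{k∈ℕ} be any sequence of real numbers with 0 ≤ u_k and u_k + ℓ ≤ 1 for all k. Then there exists α ∈ [0, 1] such that for every k ∈ ℕ, the fractional part of t_k·α lies in the closed interval [u_k, u_k + ℓ]. -/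
/-- Given `0 < ℓ < 1`, a strictly increasing sequence of positive integers `t` with
`t (k+1) / t k > 1/ℓ + 1`, and targets `u k` with `0 ≤ u k` and `u k + ℓ ≤ 1`, there
exists `α ∈ [0, 1]` such that the fractional part of `t k · α` lies in
`[u k, u k + ℓ]` for every `k`. -/
theorem exists_alpha_fract_in_intervals (ℓ : ℝ) (hℓ₀ : 0 < ℓ) (hℓ₁ : ℓ < 1)
    (t : ℕ → ℕ) (ht : StrictMono t) (htpos : ∀ k, 0 < t k)
    (hratio : ∀ k, 1 / ℓ + 1 < (t (k + 1) : ℝ) / (t k : ℝ))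
    (u : ℕ → ℝ) (hu₀ : ∀ k, 0 ≤ u k) (hu₁ : ∀ k, u k + ℓ ≤ 1) :
    ∃ α ∈ Set.Icc (0 : ℝ) 1, ∀ k : ℕ,
      Int.fract ((t k : ℝ) * α) ∈ Set.Icc (u k) (u k + ℓ) := by
  have hTpos : ∀ k, (0:ℝ) < (t k : ℝ) := fun k => by exact_mod_cast htpos k
  set m : ℕ → ℤ := fun n => Nat.rec (0 : ℤ)
    (fun k mk => ⌈(t (k+1) : ℝ) * (((mk : ℝ) + u k) / (t k : ℝ)) - u (k+1)⌉) n with hm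
  set a : ℕ → ℝ := fun k => ((m k : ℝ) + u k) / (t k : ℝ) with ha
  have hmsucc : ∀ k, m (k+1) = ⌈(t (k+1) : ℝ) * a k - u (k+1)⌉ := fun k => rfl
  have hm0 : m 0 = 0 := rfl
  have key : ∀ k, a k ≤ a (k+1) ∧ a (k+1) + ℓ / (t (k+1) : ℝ) < a k + ℓ / (t k : ℝ) := by
    intro k
    have hpk := hTpos k
    have hpk1 := hTpos (k+1)
    have h1 : (t (k+1) : ℝ) * a k - u (k+1) ≤ (m (k+1) : ℝ) := by
      rw [hmsucc]; exact Int.le_ceil _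
    have h2 : (m (k+1) : ℝ) < (t (k+1) : ℝ) * a k - u (k+1) + 1 := by
      rw [hmsucc]; exact Int.ceil_lt_add_one _
    have h3 : (1 + ℓ) / (t (k+1) : ℝ) ≤ ℓ / (t k : ℝ) := by
      rw [div_le_div_iff₀ hpk1 hpk]
      have h := hratio k
      rw [lt_div_iff₀ hpk] at h
      have h' := mul_lt_mul_of_pos_left h hℓ₀
      have e : ℓ * ((1/ℓ + 1) * (t k : ℝ)) = (1 + ℓ) * (t k : ℝ) := by
        field_simp
      rw [e] at h'
      nlinarith [h']
    constructor
    · show a k ≤ ((m (k+1) : ℝ) + u (k+1)) / (t (k+1) : ℝ)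
      rw [le_div_iff₀ hpk1, mul_comm]
      linarith
    · show ((m (k+1) : ℝ) + u (k+1)) / (t (k+1) : ℝ) + ℓ / (t (k+1) : ℝ)
        < a k + ℓ / (t k : ℝ)
      have h5 : ((m (k+1) : ℝ) + u (k+1)) / (t (k+1) : ℝ) + ℓ / (t (k+1) : ℝ)
          < a k + (1 + ℓ) / (t (k+1) : ℝ) := by
        rw [← add_div]
        have e2 : a k + (1 + ℓ) / (t (k+1) : ℝ)
            = ((t (k+1) : ℝ) * a k + (1 + ℓ)) / (t (k+1) : ℝ) := by
          field_simp
        rw [e2, div_lt_div_iff₀ hpk1 hpk1]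
        nlinarith [h2, hpk1]
      linarith
  set b : ℕ → ℝ := fun k => a k + ℓ / (t k : ℝ) with hb
  have hmono : Monotone a := monotone_nat_of_le_succ fun k => (key k).1
  have hbanti : StrictAnti b := strictAnti_nat_of_succ_lt fun k => (key k).2
  have haltb : ∀ k, a k ≤ b k := fun k => by
    have : 0 < ℓ / (t k : ℝ) := div_pos hℓ₀ (hTpos k)
    simp [hb]; linarith
  have hbound : ∀ j k, a j ≤ b k := by
    intro j k
    rcases le_total j k with h | h
    · exact (hmono h).trans (haltb k)
    · exact (haltb j).trans (hbanti.antitone h)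
  have hbdd : BddAbove (Set.range a) := ⟨b 0, by rintro x ⟨j, rfl⟩; exact hbound j 0⟩
  set α := sSup (Set.range a) with hα
  have hαge : ∀ k, a k ≤ α := fun k => le_csSup hbdd ⟨k, rfl⟩
  have hαle : ∀ k, α ≤ b k := fun k =>
    csSup_le (Set.range_nonempty a) (by rintro x ⟨j, rfl⟩; exact hbound j k)
  have hαlt : ∀ k, α < b k := fun k =>
    lt_of_le_of_lt (hαle (k+1)) (hbanti (Nat.lt_succ_self k))
  have ha0 : a 0 = u 0 / (t 0 : ℝ) := by
    simp [ha, hm0]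
  have hαmem : α ∈ Set.Icc (0:ℝ) 1 := by
    constructor
    · have := hαge 0
      rw [ha0] at this
      have : (0:ℝ) ≤ u 0 / (t 0 : ℝ) := div_nonneg (hu₀ 0) (hTpos 0).le
      linarith [hαge 0, ha0 ▸ this]
    · have hb0 : b 0 = (u 0 + ℓ) / (t 0 : ℝ) := by
        rw [hb]; simp only; rw [ha0, ← add_div]
      have h1 : (u 0 + ℓ) / (t 0 : ℝ) ≤ 1 := by
        rw [div_le_one (hTpos 0)]
        have : (1:ℝ) ≤ (t 0 : ℝ) := by exact_mod_cast htpos 0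
        linarith [hu₁ 0]
      have := hαlt 0
      rw [hb0] at this
      linarith
  refine ⟨α, hαmem, fun k => ?_⟩
  have hpk := hTpos k
  have hlow : (m k : ℝ) + u k ≤ (t k : ℝ) * α := by
    have := hαge k
    rw [ha] at this
    simp only at this
    rw [div_le_iff₀ hpk] at this
    linarith [this]
  have hhigh : (t k : ℝ) * α < (m k : ℝ) + u k + ℓ := by
    have := hαlt k
    rw [hb] at this
    simp only at this
    have e : a k + ℓ / (t k : ℝ) = ((m k : ℝ) + u k + ℓ) / (t k : ℝ) := by
      rw [ha]; field_simp
    rw [e, lt_div_iff₀ hpk] at this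
    linarith
  have hfloor : ⌊(t k : ℝ) * α⌋ = m k := by
    rw [Int.floor_eq_iff]
    constructor
    · linarith [hu₀ k]
    · push_cast
      linarith [hu₁ k]
  constructor
  · rw [Int.fract, hfloor]
    linarith
  · rw [Int.fract, hfloor]
    linarith
end

section
/- Let α = ∑_{n=1}^{∞} 2^{−n²}. Then α is irrational and for every n ∈ ℕ the fractional part of 2^n·α lies in [0, 3/4); in particular the sequence (2^n·α mod 1)_{n∈ℕ} is not dense in ℝ/ℤ. -/
private lemma aux_summable : Summable (fun k : ℕ => ((2 : ℝ) ^ ((k + 1) ^ 2))⁻¹) := by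
  have hg : Summable (fun k : ℕ => ((1:ℝ)/2) ^ k) :=
    summable_geometric_of_lt_one (by norm_num) (by norm_num)
  refine Summable.of_nonneg_of_le (fun k => by positivity) (fun k => ?_) hg
  rw [one_div, ← inv_pow]
  exact pow_le_pow_of_le_one (by norm_num) (by norm_num) (by nlinarith [sq_nonneg k])

private lemma aux_key (n : ℕ) :
    0 < Int.fract ((2 : ℝ) ^ n * ∑' k : ℕ, ((2 : ℝ) ^ ((k + 1) ^ 2))⁻¹) ∧
    Int.fract ((2 : ℝ) ^ n * ∑' k : ℕ, ((2 : ℝ) ^ ((k + 1) ^ 2))⁻¹) ≤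
      8 / 7 * ((2 : ℝ) ^ n / 2 ^ ((Nat.sqrt n + 1) ^ 2)) := by
  set m := Nat.sqrt n with hm
  have hsum : Summable (fun k : ℕ => ((2 : ℝ) ^ ((k + 1) ^ 2))⁻¹) := aux_summable
  have hsum2 : Summable (fun k : ℕ => (2 : ℝ) ^ n * ((2 : ℝ) ^ ((k + 1) ^ 2))⁻¹) :=
    hsum.mul_left _
  set T : ℝ := ∑' i : ℕ, (2 : ℝ) ^ n * ((2 : ℝ) ^ ((i + m + 1) ^ 2))⁻¹ with hT
  have hsplit : (∑ k ∈ Finset.range m, (2 : ℝ) ^ n * ((2 : ℝ) ^ ((k + 1) ^ 2))⁻¹) + T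
      = (2 : ℝ) ^ n * ∑' k : ℕ, ((2 : ℝ) ^ ((k + 1) ^ 2))⁻¹ := by
    rw [← tsum_mul_left]
    exact hsum2.sum_add_tsum_nat_add m
  have hhead : (∑ k ∈ Finset.range m, (2 : ℝ) ^ n * ((2 : ℝ) ^ ((k + 1) ^ 2))⁻¹)
      = ((∑ k ∈ Finset.range m, 2 ^ (n - (k + 1) ^ 2) : ℕ) : ℝ) := by
    push_cast
    refine Finset.sum_congr rfl fun k hk => ?_
    have hk' : (k + 1) ^ 2 ≤ n := by
      have h1 : k + 1 ≤ m := Finset.mem_range.mp hk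
      calc (k + 1) ^ 2 ≤ m ^ 2 := Nat.pow_le_pow_left h1 2
        _ ≤ n := Nat.sqrt_le' n
    rw [pow_sub₀ (2:ℝ) (by norm_num) hk']
  have hterm : ∀ i : ℕ, (2 : ℝ) ^ n * ((2 : ℝ) ^ ((i + m + 1) ^ 2))⁻¹ ≤
      ((2 : ℝ) ^ n / 2 ^ ((m + 1) ^ 2)) * ((1:ℝ)/8) ^ i := by
    intro i
    have hexp : (m + 1) ^ 2 + 3 * i ≤ (i + m + 1) ^ 2 := by
      nlinarith [sq_nonneg i, Nat.zero_le (i*m)]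
    have h2 : (2 : ℝ) ^ ((m + 1) ^ 2 + 3 * i) ≤ (2:ℝ) ^ ((i + m + 1) ^ 2) :=
      pow_le_pow_right₀ (by norm_num) hexp
    have h3 : ((2 : ℝ) ^ ((i + m + 1) ^ 2))⁻¹ ≤ ((2:ℝ) ^ ((m + 1) ^ 2 + 3 * i))⁻¹ :=
      inv_anti₀ (by positivity) h2
    calc (2 : ℝ) ^ n * ((2 : ℝ) ^ ((i + m + 1) ^ 2))⁻¹
        ≤ (2 : ℝ) ^ n * ((2:ℝ) ^ ((m + 1) ^ 2 + 3 * i))⁻¹ :=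
          mul_le_mul_of_nonneg_left h3 (by positivity)
      _ = ((2 : ℝ) ^ n / 2 ^ ((m + 1) ^ 2)) * ((1:ℝ)/8) ^ i := by
          rw [pow_add, pow_mul]
          field_simp
          rw [← mul_pow]; norm_num
  have hgeom : Summable (fun i : ℕ => ((2 : ℝ) ^ n / 2 ^ ((m + 1) ^ 2)) * ((1:ℝ)/8) ^ i) :=
    (summable_geometric_of_lt_one (by norm_num) (by norm_num)).mul_left _
  have hTsum : Summable (fun i : ℕ => (2 : ℝ) ^ n * ((2 : ℝ) ^ ((i + m + 1) ^ 2))⁻¹) :=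
    (summable_nat_add_iff m).2 hsum2
  have hT_le : T ≤ 8 / 7 * ((2 : ℝ) ^ n / 2 ^ ((m + 1) ^ 2)) := by
    calc T ≤ ∑' i : ℕ, ((2 : ℝ) ^ n / 2 ^ ((m + 1) ^ 2)) * ((1:ℝ)/8) ^ i :=
          Summable.tsum_le_tsum hterm hTsum hgeom
      _ = ((2 : ℝ) ^ n / 2 ^ ((m + 1) ^ 2)) * (1 - 1/8)⁻¹ := by
          rw [tsum_mul_left, tsum_geometric_of_lt_one (by norm_num) (by norm_num)]
      _ = 8 / 7 * ((2 : ℝ) ^ n / 2 ^ ((m + 1) ^ 2)) := by ring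
  have hT_pos : 0 < T := by
    apply Summable.tsum_pos hTsum (fun i => by positivity) 0
    positivity
  have hhalf : (2 : ℝ) ^ n / 2 ^ ((m + 1) ^ 2) ≤ 1/2 := by
    rw [div_le_div_iff₀ (by positivity) (by norm_num)]
    have h5 : n + 1 ≤ (m + 1) ^ 2 := Nat.lt_succ_sqrt' n
    calc (2:ℝ) ^ n * 2 = 2 ^ (n + 1) := by rw [pow_succ]
      _ ≤ 2 ^ ((m + 1) ^ 2) := pow_le_pow_right₀ (by norm_num) h5
      _ = 1 * 2 ^ ((m + 1) ^ 2) := by ring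
  have hT_lt_one : T < 1 := by nlinarith
  have hfract : Int.fract ((2 : ℝ) ^ n * ∑' k : ℕ, ((2 : ℝ) ^ ((k + 1) ^ 2))⁻¹) = T := by
    rw [← hsplit, hhead]
    have hc : ((∑ k ∈ Finset.range m, 2 ^ (n - (k + 1) ^ 2) : ℕ) : ℝ)
        = (((∑ k ∈ Finset.range m, 2 ^ (n - (k + 1) ^ 2) : ℕ) : ℤ) : ℝ) := by push_cast; rfl
    rw [hc, Int.fract_intCast_add, Int.fract_eq_self.mpr ⟨hT_pos.le, hT_lt_one⟩]
  rw [hfract]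
  exact ⟨hT_pos, hT_le⟩

/-- For `α = ∑_{n=1}^∞ 2^{-n²}`, the number `α` is irrational, the fractional part
of `2^n · α` always lies in `[0, 3/4)`, and in particular the sequence
`(2^n α mod 1)` is not dense in `ℝ/ℤ`. -/
theorem two_pow_orbit_not_dense (α : ℝ)
    (hα : α = ∑' n : ℕ, ((2 : ℝ) ^ ((n + 1) ^ 2))⁻¹) :
    Irrational α ∧
    (∀ n : ℕ, Int.fract ((2 : ℝ) ^ n * α) ∈ Set.Ico (0 : ℝ) (3 / 4)) ∧
    ¬ Dense (Set.range fun n : ℕ => (((2 : ℝ) ^ n * α : ℝ) : AddCircle (1 : ℝ))) := by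
  subst hα
  set α := ∑' n : ℕ, ((2 : ℝ) ^ ((n + 1) ^ 2))⁻¹ with hα
  have hIco : ∀ n : ℕ, Int.fract ((2 : ℝ) ^ n * α) ∈ Set.Ico (0 : ℝ) (3 / 4) := by
    intro n
    obtain ⟨hpos, hle⟩ := aux_key n
    refine ⟨Int.fract_nonneg _, ?_⟩
    have h1 : (2 : ℝ) ^ n / 2 ^ ((Nat.sqrt n + 1) ^ 2) ≤ 1/2 := by
      rw [div_le_div_iff₀ (by positivity) (by norm_num)]
      have h5 : n + 1 ≤ (Nat.sqrt n + 1) ^ 2 := Nat.lt_succ_sqrt' n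
      calc (2:ℝ) ^ n * 2 = 2 ^ (n + 1) := by rw [pow_succ]
        _ ≤ 2 ^ ((Nat.sqrt n + 1) ^ 2) := pow_le_pow_right₀ (by norm_num) h5
        _ = 1 * 2 ^ ((Nat.sqrt n + 1) ^ 2) := by ring
    nlinarith
  refine ⟨?_, hIco, ?_⟩
  · -- irrationality
    rintro ⟨q, hq⟩
    set d : ℕ := q.den with hd
    have hd0 : 0 < d := q.pos
    set n : ℕ := (d + 1) ^ 2 with hn
    obtain ⟨hpos, hle⟩ := aux_key n
    have hsqrt : Nat.sqrt n = d + 1 := Nat.sqrt_eq' (d + 1)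
    rw [hsqrt] at hle
    set F : ℝ := Int.fract ((2 : ℝ) ^ n * α) with hF
    have hFlt : F < 1 / d := by
      have he : (d + 1 + 1) ^ 2 = n + (2 * d + 3) := by rw [hn]; ring
      have h1 : (2 : ℝ) ^ n / 2 ^ ((d + 1 + 1) ^ 2) = ((2:ℝ) ^ (2 * d + 3))⁻¹ := by
        rw [he, pow_add]
        field_simp
      rw [h1] at hle
      have h2 : (d : ℝ) < 2 ^ (2 * d) := by
        have ha : d < 2 ^ d := Nat.lt_two_pow_self
        have h3 : (2:ℕ) ^ d ≤ 2 ^ (2 * d) := Nat.pow_le_pow_right (by norm_num) (by omega)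
        exact_mod_cast lt_of_lt_of_le ha h3
      have h4 : (8:ℝ) / 7 * ((2:ℝ) ^ (2 * d + 3))⁻¹ < 1 / d := by
        have hp : (0:ℝ) < 2 ^ (2 * d + 3) := by positivity
        have hdp : (0:ℝ) < d := by exact_mod_cast hd0
        rw [← one_div, mul_one_div, div_lt_div_iff₀ hp hdp]
        have hps : (2:ℝ) ^ (2 * d + 3) = 2 ^ (2 * d) * 8 := by rw [pow_add]; norm_num
        nlinarith
      exact lt_of_le_of_lt hle h4
    have hqd : (q : ℝ) * d = (q.num : ℝ) := by
      exact_mod_cast congrArg (Rat.cast : ℚ → ℝ) (Rat.mul_den_eq_num q)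
    have hint : (d : ℝ) * F = (((2:ℤ) ^ n * q.num - d * ⌊(2 : ℝ) ^ n * α⌋ : ℤ) : ℝ) := by
      rw [hF, Int.fract]
      push_cast
      rw [← hq]
      linear_combination (2:ℝ) ^ n * hqd
    have hc : (0:ℤ) < (2:ℤ) ^ n * q.num - d * ⌊(2 : ℝ) ^ n * α⌋ := by
      have hx : (0:ℝ) < (d : ℝ) * F := by
        apply mul_pos _ hpos
        exact_mod_cast hd0
      rw [hint] at hx
      exact_mod_cast hx
    have hge : (1:ℝ) ≤ (d : ℝ) * F := by
      rw [hint]; exact_mod_cast hc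
    have hcon : (d:ℝ) * F < 1 := by
      have hdp : (0:ℝ) < d := by exact_mod_cast hd0
      calc (d:ℝ) * F < (d:ℝ) * (1/d) := mul_lt_mul_of_pos_left hFlt hdp
        _ = 1 := by field_simp
    linarith
  · -- non-density
    intro hdense
    have hball := Metric.dense_iff.mp hdense ((7/8 : ℝ) : AddCircle (1:ℝ)) (1/8) (by norm_num)
    obtain ⟨y, hy1, n, rfl⟩ := hball
    set F : ℝ := Int.fract ((2 : ℝ) ^ n * α) with hF
    obtain ⟨hF0, hF34⟩ := hIco n
    have hquot : (((2 : ℝ) ^ n * α : ℝ) : AddCircle (1:ℝ)) = ((F : ℝ) : AddCircle (1:ℝ)) := by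
      rw [QuotientAddGroup.eq_iff_sub_mem]
      refine ⟨⌊(2 : ℝ) ^ n * α⌋, ?_⟩
      show ⌊(2 : ℝ) ^ n * α⌋ • (1:ℝ) = 2 ^ n * α - F
      rw [zsmul_eq_mul, mul_one, hF, Int.self_sub_fract]
    have hdist : dist ((F : ℝ) : AddCircle (1:ℝ)) (((7/8:ℝ)) : AddCircle (1:ℝ)) < 1/8 := by
      rw [← hquot]
      exact Metric.mem_ball.mp hy1
    have hsub : ((F : ℝ) : AddCircle (1:ℝ)) - ((7/8:ℝ) : AddCircle (1:ℝ))
        = ((F - 7/8 : ℝ) : AddCircle (1:ℝ)) := (QuotientAddGroup.mk_sub _ _ _).symm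
    rw [dist_eq_norm, hsub, AddCircle.norm_eq, inv_one, one_mul, mul_one, round_eq] at hdist
    rcases le_or_gt (-(1/2 : ℝ)) (F - 7/8) with h | h
    · have hfl : ⌊F - 7/8 + 1/2⌋ = 0 := by
        rw [Int.floor_eq_zero_iff]
        constructor
        · linarith
        · simp only [Set.mem_Ico] at *
          linarith
      rw [hfl] at hdist
      rw [abs_lt] at hdist
      push_cast at hdist
      linarith [hdist.2]
    · have hfl : ⌊F - 7/8 + 1/2⌋ = -1 := by
        rw [Int.floor_eq_iff]
        constructor <;> push_cast <;> linarith
      rw [hfl] at hdist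
      rw [abs_lt] at hdist
      push_cast at hdist
      linarith [hdist.1]
end
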